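/- arXiv:1501.05559 — 3 statements merged into one kernel-verified Lean document; each statement's English description precedes it below -/
import Mathlib

section
/- Let n ≥ 2, let S denote the unit sphere of the Euclidean space ℝⁿ, and let σ denote the canonical (rotation-invariant, finite, fully supported) surface measure on S. If f : S → ℝ is continuous with f(x) > 0 for every x ∈ S, then ∫_S f dσ > 0 and ‖∫_S x·f(x) dσ(x)‖ < ∫_S f dσ; equivalently, (∫_S f dσ)² > Σ_{i=1}^{n} (∫_S xⁱ f(x) dσ(x))². In other words, the vector P := (∫_S f dσ, ∫_S x¹ f dσ, …, ∫_S xⁿ f dσ) ∈ ℝ^{1+n} is future timelike for the Minkowski quadratic form. -/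
open MeasureTheory Metric
open ENNReal Pointwise

/-- For `n ≥ 2`, the unit sphere `S` of Euclidean `ℝⁿ` with its canonical
surface measure `σ`, and a continuous strictly positive `f : S → ℝ`, we have
`∫ f dσ > 0`, `‖∫ x • f x dσ‖ < ∫ f dσ`, and equivalently
`(∫ f dσ)² > Σᵢ (∫ xⁱ f dσ)²`; i.e. the vector `P = (∫ f, ∫ x¹ f, …, ∫ xⁿ f)`
is future timelike for the Minkowski quadratic form. -/
theorem stmt0 (n : ℕ) (hn : 2 ≤ n)
    (σ : Measure (sphere (0 : EuclideanSpace ℝ (Fin n)) 1))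
    (hσ : σ = (volume : Measure (EuclideanSpace ℝ (Fin n))).toSphere)
    (f : sphere (0 : EuclideanSpace ℝ (Fin n)) 1 → ℝ)
    (hf : Continuous f)
    (hpos : ∀ x, 0 < f x) :
    0 < ∫ x, f x ∂σ ∧
    ‖∫ x, f x • (x : EuclideanSpace ℝ (Fin n)) ∂σ‖ < ∫ x, f x ∂σ ∧
    (∑ i : Fin n, (∫ x, (x : EuclideanSpace ℝ (Fin n)) i * f x ∂σ) ^ 2)
      < (∫ x, f x ∂σ) ^ 2 := by
  subst hσ
  set σ := (volume : Measure (EuclideanSpace ℝ (Fin n))).toSphere with hσ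
  -- positivity of total measure
  have hU : 0 < σ Set.univ := by
    rw [Measure.toSphere_apply_univ]
    have h1 : (0:ℝ≥0∞) < volume (ball (0 : EuclideanSpace ℝ (Fin n)) 1) := measure_ball_pos _ _ one_pos
    have hd : Module.finrank ℝ (EuclideanSpace ℝ (Fin n)) = n := finrank_euclideanSpace_fin
    rw [hd]
    exact ENNReal.mul_pos (Nat.cast_ne_zero.mpr (by omega)) h1.ne'
  have hfi : Integrable f σ :=
    hf.integrable_of_hasCompactSupport (isClosed_tsupport f).isCompact
  have hI : 0 < ∫ x, f x ∂σ := by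
    rw [integral_pos_iff_support_of_nonneg (fun x => (hpos x).le) hfi]
    have : Function.support f = Set.univ := Set.eq_univ_of_forall fun x => (hpos x).ne'
    rw [this]; exact hU
  have hvint : Integrable (fun x : sphere (0:EuclideanSpace ℝ (Fin n)) 1 => f x • (x : EuclideanSpace ℝ (Fin n))) σ :=
    (hf.smul continuous_subtype_val).integrable_of_hasCompactSupport
      (isClosed_tsupport _).isCompact
  set v : EuclideanSpace ℝ (Fin n) := ∫ x, f x • (x : EuclideanSpace ℝ (Fin n)) ∂σ with hv
  have key : ‖v‖ < ∫ x, f x ∂σ := by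
    rcases eq_or_ne v 0 with h0 | h0
    · rw [h0, norm_zero]; exact hI
    · have hnv : 0 < ‖v‖ := norm_pos_iff.mpr h0
      set u : EuclideanSpace ℝ (Fin n) := ‖v‖⁻¹ • v with hu
      have hun : ‖u‖ = 1 := by
        rw [hu, norm_smul, norm_inv, norm_norm, inv_mul_cancel₀ hnv.ne']
      -- u lies on the sphere
      have humem : u ∈ sphere (0 : EuclideanSpace ℝ (Fin n)) 1 := by simpa using hun
      -- the nonneg "gap" integrand
      set g : sphere (0:EuclideanSpace ℝ (Fin n)) 1 → ℝ := fun x => f x * (1 - inner ℝ u (x : EuclideanSpace ℝ (Fin n))) with hg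
      have hgc : Continuous g := by
        apply hf.mul
        exact continuous_const.sub ((continuous_const.inner continuous_subtype_val))
      have hgi : Integrable g σ :=
        hgc.integrable_of_hasCompactSupport (isClosed_tsupport _).isCompact
      have hg0 : ∀ x, 0 ≤ g x := by
        intro x
        have hx1 : ‖(x:EuclideanSpace ℝ (Fin n))‖ = 1 := norm_eq_of_mem_sphere x
        have : inner ℝ u (x:EuclideanSpace ℝ (Fin n)) ≤ (1:ℝ) := by
          calc (inner ℝ u (x:EuclideanSpace ℝ (Fin n)) : ℝ) ≤ ‖u‖ * ‖(x:EuclideanSpace ℝ (Fin n))‖ := real_inner_le_norm _ _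
          _ = 1 := by rw [hun, hx1, one_mul]
        exact mul_nonneg (hpos x).le (by linarith)
      have hσu : σ {(⟨u, humem⟩ : sphere (0:EuclideanSpace ℝ (Fin n)) 1)} = 0 := by
        rw [hσ, Measure.toSphere_apply' _ (measurableSet_singleton _)]
        have himg : (Subtype.val '' {(⟨u, humem⟩ : sphere (0:EuclideanSpace ℝ (Fin n)) 1)}) = {u} := by simp
        rw [himg]
        have hsub : Set.Ioo (0:ℝ) 1 • ({u} : Set (EuclideanSpace ℝ (Fin n))) ⊆ (Submodule.span ℝ {u} : Set (EuclideanSpace ℝ (Fin n))) := by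
          rintro y ⟨c, z, hc, hz, rfl⟩
          rw [Set.mem_singleton_iff] at hz
          subst hz
          exact Submodule.smul_mem _ _ (Submodule.mem_span_singleton_self u)
        have hne : Submodule.span ℝ ({u} : Set (EuclideanSpace ℝ (Fin n))) ≠ ⊤ := by
          intro h
          have hu0 : u ≠ 0 := by
            intro h'; rw [h'] at hun; simp at hun
          have h1 : Module.finrank ℝ (Submodule.span ℝ ({u} : Set (EuclideanSpace ℝ (Fin n)))) = 1 :=
            finrank_span_singleton hu0
          rw [h, finrank_top, finrank_euclideanSpace_fin] at h1
          omega
        have hz : volume (Submodule.span ℝ ({u} : Set (EuclideanSpace ℝ (Fin n))) : Set (EuclideanSpace ℝ (Fin n))) = 0 :=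
          Measure.addHaar_submodule _ _ hne
        have := measure_mono_null hsub hz
        rw [this, mul_zero]
      have hgpos : 0 < ∫ x, g x ∂σ := by
        rcases (lt_or_eq_of_le (integral_nonneg (f := g) hg0)) with h | h
        · exact h
        · exfalso
          have hae : g =ᵐ[σ] 0 :=
            (integral_eq_zero_iff_of_nonneg hg0 hgi).mp h.symm
          have hae2 : ∀ᵐ x ∂σ, x = (⟨u, humem⟩ : sphere (0:EuclideanSpace ℝ (Fin n)) 1) := by
            filter_upwards [hae] with x hx
            have hfx := (hpos x).ne'
            have : (1 : ℝ) - inner ℝ u (x:EuclideanSpace ℝ (Fin n)) = 0 := by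
              rcases mul_eq_zero.mp hx with h' | h'
              · exact absurd h' hfx
              · exact h'
            have hinner : (inner ℝ u (x:EuclideanSpace ℝ (Fin n)) : ℝ) = 1 := by linarith
            have : u = (x : EuclideanSpace ℝ (Fin n)) :=
              (inner_eq_one_iff_of_norm_eq_one hun (norm_eq_of_mem_sphere x)).mp hinner
            exact Subtype.ext this.symm
          have : σ {x | x ≠ (⟨u, humem⟩ : sphere (0:EuclideanSpace ℝ (Fin n)) 1)} = 0 := hae2
          have hsub2 : (Set.univ : Set (sphere (0:EuclideanSpace ℝ (Fin n)) 1)) ⊆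
              {(⟨u, humem⟩ : sphere (0:EuclideanSpace ℝ (Fin n)) 1)} ∪
              {x | x ≠ (⟨u, humem⟩ : sphere (0:EuclideanSpace ℝ (Fin n)) 1)} := by
            intro x _
            by_cases h : x = (⟨u, humem⟩ : sphere (0:EuclideanSpace ℝ (Fin n)) 1)
            · exact Or.inl (by simp [h])
            · exact Or.inr h
          have huniv := (measure_mono (μ := σ) hsub2).trans (measure_union_le _ _)
          rw [hσu, this, add_zero] at huniv
          exact absurd huniv (not_le.mpr hU)
      have hinner_v : (inner ℝ u v : ℝ) = ‖v‖ := by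
        rw [hu, real_inner_smul_left, real_inner_self_eq_norm_sq]
        field_simp
      have hint : (inner ℝ u v : ℝ) = ∫ x, f x * inner ℝ u (x : EuclideanSpace ℝ (Fin n)) ∂σ := by
        rw [hv, ← integral_inner hvint u]
        congr 1; ext x
        rw [real_inner_smul_right]
      have hsplit : ∫ x, f x * inner ℝ u (x : EuclideanSpace ℝ (Fin n)) ∂σ = (∫ x, f x ∂σ) - ∫ x, g x ∂σ := by
        rw [← integral_sub hfi hgi]
        congr 1; ext x; rw [hg]; ring
      rw [← hinner_v, hint, hsplit]
      linarith
  refine ⟨hI, key, ?_⟩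
  have hvi : ∀ i : Fin n, v i = ∫ x, (x : EuclideanSpace ℝ (Fin n)) i * f x ∂σ := by
    intro i
    rw [hv, show ((∫ x, f x • (x : EuclideanSpace ℝ (Fin n)) ∂σ) i) = (EuclideanSpace.proj i) (∫ x, f x • (x : EuclideanSpace ℝ (Fin n)) ∂σ) from rfl,
      ← ContinuousLinearMap.integral_comp_comm _ hvint]
    congr 1; ext x
    simp [mul_comm]
  have hnorm : ∑ i : Fin n, (∫ x, (x : EuclideanSpace ℝ (Fin n)) i * f x ∂σ) ^ 2 = ‖v‖ ^ 2 := by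
    rw [EuclideanSpace.norm_eq v, Real.sq_sqrt (by positivity)]
    exact Finset.sum_congr rfl fun i _ => by rw [← hvi i, Real.norm_eq_abs, sq_abs]
  rw [hnorm]
  exact pow_lt_pow_left₀ key (norm_nonneg _) two_ne_zero
end

section
/- Let μ be a finite measure on a measurable space α with μ(α) > 0, let E be the Euclidean space ℝⁿ, and let v : α → E be μ-integrable such that a ↦ √(1 + ‖v(a)‖²) is also μ-integrable. Define C₀ := ∫_α √(1 + ‖v(a)‖²) dμ(a) and C := ∫_α v(a) dμ(a). Then C₀² − ‖C‖² ≥ μ(α)² > 0; in particular ‖C‖ < C₀, i.e. the vector (C₀, C) ∈ ℝ × E is future timelike. -/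
open MeasureTheory

/-- For a finite measure `μ` with `μ(α) > 0` and a `μ`-integrable
`v : α → ℝⁿ` such that `a ↦ √(1 + ‖v a‖²)` is integrable, the vector
`(C₀, C) = (∫ √(1+‖v‖²) dμ, ∫ v dμ)` satisfies `C₀² − ‖C‖² ≥ μ(α)² > 0`;
in particular `‖C‖ < C₀`, i.e. `(C₀, C)` is future timelike. -/
theorem stmt1 {α : Type*} [MeasurableSpace α] (μ : Measure α) [IsFiniteMeasure μ]
    (hμ : 0 < μ Set.univ)
    (n : ℕ) (v : α → EuclideanSpace ℝ (Fin n))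
    (hv : Integrable v μ)
    (hv' : Integrable (fun a => Real.sqrt (1 + ‖v a‖ ^ 2)) μ) :
    0 < (μ Set.univ).toReal ^ 2 ∧
    (μ Set.univ).toReal ^ 2 ≤
      (∫ a, Real.sqrt (1 + ‖v a‖ ^ 2) ∂μ) ^ 2 - ‖∫ a, v a ∂μ‖ ^ 2 ∧
    ‖∫ a, v a ∂μ‖ < ∫ a, Real.sqrt (1 + ‖v a‖ ^ 2) ∂μ := by
  set e : WithLp 2 (ℝ × EuclideanSpace ℝ (Fin n)) ≃L[ℝ] ℝ × EuclideanSpace ℝ (Fin n) :=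
    WithLp.prodContinuousLinearEquiv 2 ℝ ℝ (EuclideanSpace ℝ (Fin n)) with he
  set w : α → WithLp 2 (ℝ × EuclideanSpace ℝ (Fin n)) := fun a => e.symm (1, v a) with hw
  have hpair : Integrable (fun a => ((1 : ℝ), v a)) μ :=
    (integrable_const 1).prodMk hv
  have hnorm : ∀ a, ‖w a‖ = Real.sqrt (1 + ‖v a‖ ^ 2) := by
    intro a
    rw [hw]
    rw [WithLp.prod_norm_eq_of_L2]
    norm_num [he]
  have hiw : ∫ a, w a ∂μ = e.symm ((μ Set.univ).toReal, ∫ a, v a ∂μ) := by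
    rw [hw]
    rw [ContinuousLinearEquiv.integral_comp_comm e.symm]
    congr 1
    rw [integral_pair (integrable_const 1) hv, integral_const, smul_eq_mul, mul_one]
    rfl
  have hsq : ‖∫ a, w a ∂μ‖ ^ 2 = (μ Set.univ).toReal ^ 2 + ‖∫ a, v a ∂μ‖ ^ 2 := by
    rw [hiw, WithLp.prod_norm_sq_eq_of_L2]
    norm_num [he, Real.norm_eq_abs, sq_abs]
  have hle : ‖∫ a, w a ∂μ‖ ≤ ∫ a, Real.sqrt (1 + ‖v a‖ ^ 2) ∂μ := by
    calc ‖∫ a, w a ∂μ‖ ≤ ∫ a, ‖w a‖ ∂μ := norm_integral_le_integral_norm _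
    _ = ∫ a, Real.sqrt (1 + ‖v a‖ ^ 2) ∂μ := by simp_rw [hnorm]
  have hC₀ : (0 : ℝ) ≤ ∫ a, Real.sqrt (1 + ‖v a‖ ^ 2) ∂μ := (norm_nonneg _).trans hle
  have hsqle : (μ Set.univ).toReal ^ 2 + ‖∫ a, v a ∂μ‖ ^ 2 ≤
      (∫ a, Real.sqrt (1 + ‖v a‖ ^ 2) ∂μ) ^ 2 := by
    rw [← hsq]
    exact pow_le_pow_left₀ (norm_nonneg _) hle 2
  have hμpos : 0 < (μ Set.univ).toReal :=
    ENNReal.toReal_pos hμ.ne' (measure_ne_top μ _)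
  have h1 : 0 < (μ Set.univ).toReal ^ 2 := by positivity
  refine ⟨h1, by linarith, ?_⟩
  have h2 : ‖∫ a, v a ∂μ‖ ^ 2 < (∫ a, Real.sqrt (1 + ‖v a‖ ^ 2) ∂μ) ^ 2 := by linarith
  exact lt_of_pow_lt_pow_left₀ 2 hC₀ h2
end

section
/- Let n ≥ 1, let y ∈ ℝⁿ with ‖y‖ < 1, and let i ∈ {1,…,n}. Define V₀(y) := (1+‖y‖²)/(1−‖y‖²) and Vᵢ(y) := 2yⁱ/(1−‖y‖²). Then the Euclidean gradients of these functions satisfy the identity ((1−‖y‖²)/2)² · ( Vᵢ(y)·∇V₀(y) − V₀(y)·∇Vᵢ(y) ) = yⁱ·y − ((1+‖y‖²)/2)·eᵢ, where eᵢ is the i-th standard basis vector of ℝⁿ. -/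
open InnerProductSpace

/-- In the Poincaré ball model, with lapse functions
`V₀(y) = (1+‖y‖²)/(1−‖y‖²)` and `Vᵢ(y) = 2yⁱ/(1−‖y‖²)`, one has, for `‖y‖ < 1`,
`((1−‖y‖²)/2)² • (Vᵢ(y)∇V₀(y) − V₀(y)∇Vᵢ(y)) = yⁱ • y − ((1+‖y‖²)/2) • eᵢ`. -/
theorem stmt4 (n : ℕ) (hn : 1 ≤ n) (y : EuclideanSpace ℝ (Fin n)) (hy : ‖y‖ < 1)
    (i : Fin n)
    (V₀ : EuclideanSpace ℝ (Fin n) → ℝ)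
    (hV₀ : V₀ = fun z => (1 + ‖z‖ ^ 2) / (1 - ‖z‖ ^ 2))
    (Vi : EuclideanSpace ℝ (Fin n) → ℝ)
    (hVi : Vi = fun z => 2 * z i / (1 - ‖z‖ ^ 2)) :
    ((1 - ‖y‖ ^ 2) / 2) ^ 2 •
        (Vi y • gradient V₀ y - V₀ y • gradient Vi y) =
      y i • y - ((1 + ‖y‖ ^ 2) / 2) • EuclideanSpace.single i (1 : ℝ) := by
  have hy2 : ‖y‖ ^ 2 < 1 := by nlinarith [norm_nonneg y]
  have hdne : (1 - ‖y‖ ^ 2) ≠ 0 := by nlinarith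
  set D : EuclideanSpace ℝ (Fin n) →L[ℝ] ℝ := 2 • innerSL ℝ y with hD
  have hnormsq : HasFDerivAt (fun z : EuclideanSpace ℝ (Fin n) => ‖z‖ ^ 2) D y :=
    (hasStrictFDerivAt_norm_sq y).hasFDerivAt
  have hden : HasFDerivAt (fun z : EuclideanSpace ℝ (Fin n) => 1 - ‖z‖ ^ 2) (-D) y :=
    hnormsq.const_sub 1
  have hinv : HasFDerivAt (fun z : EuclideanSpace ℝ (Fin n) => (1 - ‖z‖ ^ 2)⁻¹)
      ((-((1 - ‖y‖ ^ 2) ^ 2)⁻¹) • (-D)) y :=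
    (hasDerivAt_inv hdne).comp_hasFDerivAt y hden
  have hnum0 : HasFDerivAt (fun z : EuclideanSpace ℝ (Fin n) => 1 + ‖z‖ ^ 2) D y :=
    hnormsq.const_add 1
  -- gradient of V₀
  have hV0' : HasFDerivAt V₀
      ((1 + ‖y‖ ^ 2) • ((-((1 - ‖y‖ ^ 2) ^ 2)⁻¹) • (-D)) + (1 - ‖y‖ ^ 2)⁻¹ • D) y := by
    rw [hV₀]
    simp only [div_eq_mul_inv]
    exact hnum0.mul hinv
  have hG0 : gradient V₀ y = (4 / (1 - ‖y‖ ^ 2) ^ 2) • y := by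
    apply HasGradientAt.gradient
    rw [hasGradientAt_iff_hasFDerivAt]
    refine hV0'.congr_fderiv ?_
    ext w
    simp [hD, toDual_apply_apply, real_inner_smul_left, ContinuousLinearMap.smul_apply]
    field_simp
    ring
  -- gradient of Vi
  have hproj : HasFDerivAt (fun z : EuclideanSpace ℝ (Fin n) => z i)
      (EuclideanSpace.proj (𝕜 := ℝ) i) y :=
    (EuclideanSpace.proj (𝕜 := ℝ) i).hasFDerivAt
  have hnumi : HasFDerivAt (fun z : EuclideanSpace ℝ (Fin n) => 2 * z i)
      ((2 : ℝ) • EuclideanSpace.proj (𝕜 := ℝ) i) y := hproj.const_mul 2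
  have hVi' : HasFDerivAt Vi
      ((2 * y i) • ((-((1 - ‖y‖ ^ 2) ^ 2)⁻¹) • (-D)) +
        (1 - ‖y‖ ^ 2)⁻¹ • ((2 : ℝ) • EuclideanSpace.proj (𝕜 := ℝ) i)) y := by
    rw [hVi]
    simp only [div_eq_mul_inv]
    exact hnumi.mul hinv
  have hGi : gradient Vi y =
      (4 * y i / (1 - ‖y‖ ^ 2) ^ 2) • y +
        (2 / (1 - ‖y‖ ^ 2)) • EuclideanSpace.single i (1 : ℝ) := by
    apply HasGradientAt.gradient
    rw [hasGradientAt_iff_hasFDerivAt]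
    refine hVi'.congr_fderiv ?_
    ext w
    simp [hD, toDual_apply_apply, inner_add_left, real_inner_smul_left,
      EuclideanSpace.inner_single_left, PiLp.proj_apply,
      ContinuousLinearMap.smul_apply]
    field_simp
    try ring
  rw [hG0, hGi]
  have hV0y : V₀ y = (1 + ‖y‖ ^ 2) / (1 - ‖y‖ ^ 2) := by rw [hV₀]
  have hViy : Vi y = 2 * y i / (1 - ‖y‖ ^ 2) := by rw [hVi]
  rw [hV0y, hViy]
  match_scalars
  · field_simp
    ring
  · field_simp
end
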